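/- Let (Y_t)_{t≥0} be a nonnegative real-valued stochastic process adapted to a filtration (F_t), and suppose there exist constants C, b, ε > 0 such that (a) Y_{t+1} - Y_t ≤ b almost surely for all t, and (b) E[(Y_{t+1} - Y_t)·1_{Y_{t+1}-Y_t ≥ -b} | F_t] ≤ -ε on the event {Y_t ≥ C}. Then for h > 0 small enough that h < 1/b and h b^2 < ε/2, setting γ = 1 - hε/2, one has E[e^{h Y_{t+1}} | F_t] ≤ γ e^{h Y_t} on {Y_t ≥ C} and E[e^{h Y_{t+1}} | F_t] ≤ e^{h(Y_t + b)} on {Y_t < C}. -/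

import Mathlib

open MeasureTheory Filter

private lemma exp_quad (x : ℝ) (hx : |x| ≤ 1) : Real.exp x ≤ 1 + x + x ^ 2 := by
  have h3 := Real.exp_bound hx (by norm_num : 0 < 3)
  simp [Finset.sum_range_succ, Nat.factorial] at h3
  rw [abs_le] at h3
  have h1 : |x| ^ 3 ≤ x ^ 2 := by
    have : |x| ^ 3 ≤ |x| ^ 2 := pow_le_pow_of_le_one (abs_nonneg x) hx (by norm_num)
    simpa [sq_abs] using this
  linarith [h3.2]

private lemma key_pointwise (h b d : ℝ) (hh0 : 0 < h) (hb : 0 < b) (hhb : h * b ≤ 1)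
    (hd : d ≤ b) :
    Real.exp (h * d) ≤ 1 + h * (d * (if -b ≤ d then 1 else 0)) + h ^ 2 * b ^ 2 := by
  by_cases hcase : -b ≤ d
  · rw [if_pos hcase, mul_one]
    have habsd : |d| ≤ b := abs_le.2 ⟨hcase, hd⟩
    have habs : |h * d| ≤ 1 := by
      rw [abs_mul, abs_of_pos hh0]
      nlinarith [abs_nonneg d]
    have hq := exp_quad (h * d) habs
    have hd2 : d ^ 2 ≤ b ^ 2 := by nlinarith [abs_le.1 habsd]
    nlinarith [sq_nonneg h, hd2, hq]
  · rw [if_neg hcase, mul_zero, mul_zero]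
    have hd0 : h * d ≤ 0 := by
      push_neg at hcase
      nlinarith
    have := Real.exp_le_one_iff.2 hd0
    nlinarith [sq_nonneg (h * b)]

theorem exp_drift_bound {Ω : Type*} {m0 : MeasurableSpace Ω} {μ : Measure Ω}
    [IsProbabilityMeasure μ] (ℱ : Filtration ℕ m0) (Y : ℕ → Ω → ℝ)
    (hadapt : Adapted ℱ Y) (hY0 : ∀ t ω, 0 ≤ Y t ω)
    (C b ε : ℝ) (hC : 0 < C) (hb : 0 < b) (hε : 0 < ε)
    (hbdd : ∀ t, ∀ᵐ ω ∂μ, Y (t + 1) ω - Y t ω ≤ b)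
    (hdrift : ∀ t, ∀ᵐ ω ∂μ, C ≤ Y t ω →
      (μ[fun ω' => (Y (t + 1) ω' - Y t ω') *
          (if -b ≤ Y (t + 1) ω' - Y t ω' then 1 else 0) | ℱ t]) ω ≤ -ε)
    (h : ℝ) (hh0 : 0 < h) (hh1 : h < 1 / b) (hh2 : h * b ^ 2 < ε / 2) :
    ∀ t, ∀ᵐ ω ∂μ,
      (C ≤ Y t ω →
        (μ[fun ω' => Real.exp (h * Y (t + 1) ω') | ℱ t]) ω ≤
          (1 - h * ε / 2) * Real.exp (h * Y t ω)) ∧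
      (Y t ω < C →
        (μ[fun ω' => Real.exp (h * Y (t + 1) ω') | ℱ t]) ω ≤
          Real.exp (h * (Y t ω + b))) := by
  intro t
  have hb' : h * b < 1 := (lt_div_iff₀ hb).mp hh1
  set g : Ω → ℝ := fun ω' => (Y (t + 1) ω' - Y t ω') *
      (if -b ≤ Y (t + 1) ω' - Y t ω' then 1 else 0) with hgdef
  -- measurability
  have hYm : ∀ s, Measurable (Y s) := fun s => (show Measurable[ℱ s] (Y s) from hadapt s).mono (ℱ.le s) le_rfl
  have hΔm : Measurable (fun ω => Y (t + 1) ω - Y t ω) := (hYm (t + 1)).sub (hYm t)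
  have hgm : Measurable g := by
    apply hΔm.mul
    exact Measurable.ite (measurableSet_le measurable_const hΔm) measurable_const
      measurable_const
  have hg_bd : ∀ᵐ ω ∂μ, ‖g ω‖ ≤ b := by
    filter_upwards [hbdd t] with ω hω
    rw [Real.norm_eq_abs, hgdef]
    dsimp only
    split_ifs with hif
    · rw [mul_one]; exact abs_le.2 ⟨hif, hω⟩
    · simpa using hb.le
  have hg_int : Integrable g μ :=
    (integrable_const b).mono' hgm.aestronglyMeasurable hg_bd
  have hexpΔ_int : Integrable (fun ω => Real.exp (h * (Y (t + 1) ω - Y t ω))) μ := by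
    apply (integrable_const (Real.exp (h * b))).mono'
      ((measurable_const.mul hΔm).exp).aestronglyMeasurable
    filter_upwards [hbdd t] with ω hω
    rw [Real.norm_eq_abs, abs_of_pos (Real.exp_pos _)]
    exact Real.exp_le_exp.2 (by show h * (Y (t + 1) ω - Y t ω) ≤ h * b; nlinarith)
  -- lower bound for condexp of g
  have hglb : ∀ᵐ ω ∂μ, -b ≤ (μ[g|ℱ t]) ω := by
    have h1 : (fun _ : Ω => -b) ≤ᵐ[μ] g := by
      filter_upwards [hg_bd] with ω hω
      exact (abs_le.1 (by rwa [Real.norm_eq_abs] at hω)).1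
    have h2 := condExp_mono (μ := μ) (m := ℱ t) (integrable_const (-b)) hg_int h1
    filter_upwards [h2] with ω hω
    rwa [condExp_const (ℱ.le t)] at hω
  -- condexp of exp(h Δ) bounds
  have hΦ_int : Integrable (fun ω => 1 + h * g ω + h ^ 2 * b ^ 2) μ :=
    ((integrable_const (1 : ℝ)).add (hg_int.const_mul h)).add (integrable_const _)
  have hptwise : ∀ᵐ ω ∂μ,
      Real.exp (h * (Y (t + 1) ω - Y t ω)) ≤ 1 + h * g ω + h ^ 2 * b ^ 2 := by
    filter_upwards [hbdd t] with ω hω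
    exact key_pointwise h b _ hh0 hb hb'.le hω
  have hcond1 : μ[fun ω => Real.exp (h * (Y (t + 1) ω - Y t ω))|ℱ t] ≤ᵐ[μ]
      μ[fun ω => 1 + h * g ω + h ^ 2 * b ^ 2|ℱ t] :=
    condExp_mono hexpΔ_int hΦ_int hptwise
  have hcondΦ : μ[fun ω => 1 + h * g ω + h ^ 2 * b ^ 2|ℱ t] =ᵐ[μ]
      fun ω => 1 + h * (μ[g|ℱ t]) ω + h ^ 2 * b ^ 2 := by
    have e1 := condExp_add (μ := μ) (m := ℱ t)
      ((integrable_const (1 : ℝ)).add (hg_int.const_mul h)) (integrable_const (h ^ 2 * b ^ 2))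
    have e2 := condExp_add (μ := μ) (m := ℱ t) (integrable_const (1 : ℝ)) (hg_int.const_mul h)
    have e3 : μ[fun ω => h * g ω|ℱ t] =ᵐ[μ] fun ω => h * (μ[g|ℱ t]) ω := by
      exact condExp_smul (μ := μ) (m := ℱ t) h g
    filter_upwards [e1, e2, e3] with ω h1 h2 h3
    calc (μ[fun ω => 1 + h * g ω + h ^ 2 * b ^ 2|ℱ t]) ω
        = (μ[fun ω => 1 + h * g ω|ℱ t]) ω + (μ[fun _ => h ^ 2 * b ^ 2|ℱ t]) ω := h1
      _ = 1 + h * (μ[g|ℱ t]) ω + h ^ 2 * b ^ 2 := by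
          rw [condExp_const (ℱ.le t)]
          have : (μ[fun ω => 1 + h * g ω|ℱ t]) ω
              = (μ[fun _ => (1 : ℝ)|ℱ t]) ω + (μ[fun ω => h * g ω|ℱ t]) ω := h2
          rw [this, condExp_const (ℱ.le t), h3]
  have hcond2 : μ[fun ω => Real.exp (h * (Y (t + 1) ω - Y t ω))|ℱ t] ≤ᵐ[μ]
      fun _ => Real.exp (h * b) := by
    have hle : (fun ω => Real.exp (h * (Y (t + 1) ω - Y t ω))) ≤ᵐ[μ]
        fun _ => Real.exp (h * b) := by
      filter_upwards [hbdd t] with ω hω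
      exact Real.exp_le_exp.2 (by nlinarith)
    have := condExp_mono (μ := μ) (m := ℱ t) hexpΔ_int (integrable_const _) hle
    filter_upwards [this] with ω hω
    rwa [condExp_const (ℱ.le t)] at hω
  by_cases hint : Integrable (fun ω => Real.exp (h * Y (t + 1) ω)) μ
  · -- integrable case : pull-out property
    have hfm : StronglyMeasurable[ℱ t] (fun ω => Real.exp (h * Y t ω)) :=
      ((measurable_const.mul (show Measurable[ℱ t] (Y t) from hadapt t)).exp).stronglyMeasurable
    have hfuneq : (fun ω => Real.exp (h * Y t ω) * Real.exp (h * (Y (t + 1) ω - Y t ω)))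
        = fun ω => Real.exp (h * Y (t + 1) ω) := by
      funext ω; rw [← Real.exp_add]; ring_nf
    have hfg : Integrable
        ((fun ω => Real.exp (h * Y t ω)) * (fun ω => Real.exp (h * (Y (t + 1) ω - Y t ω)))) μ := by
      have : ((fun ω => Real.exp (h * Y t ω)) *
          (fun ω => Real.exp (h * (Y (t + 1) ω - Y t ω))))
          = fun ω => Real.exp (h * Y (t + 1) ω) := hfuneq
      rw [this]; exact hint
    have hpull := condExp_mul_of_stronglyMeasurable_left hfm hfg hexpΔ_int
    have hpull' : μ[fun ω' => Real.exp (h * Y (t + 1) ω')|ℱ t] =ᵐ[μ]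
        fun ω => Real.exp (h * Y t ω) *
          (μ[fun ω' => Real.exp (h * (Y (t + 1) ω' - Y t ω'))|ℱ t]) ω := by
      have := hpull
      rw [show ((fun ω => Real.exp (h * Y t ω)) *
          (fun ω => Real.exp (h * (Y (t + 1) ω - Y t ω))))
          = fun ω => Real.exp (h * Y (t + 1) ω) from hfuneq] at this
      exact this
    filter_upwards [hpull', hcond1, hcondΦ, hcond2, hdrift t] with ω hp h1 h2 h3 h4
    have hΔcond := h1
    constructor
    · intro hCY
      have hgc : (μ[g|ℱ t]) ω ≤ -ε := h4 hCY
      have hle : (μ[fun ω' => Real.exp (h * (Y (t + 1) ω' - Y t ω'))|ℱ t]) ω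
          ≤ 1 - h * ε / 2 := by
        have := le_trans hΔcond (le_of_eq h2)
        nlinarith
      rw [hp]
      have hexp := (Real.exp_pos (h * Y t ω)).le
      calc Real.exp (h * Y t ω) *
            (μ[fun ω' => Real.exp (h * (Y (t + 1) ω' - Y t ω'))|ℱ t]) ω
          ≤ Real.exp (h * Y t ω) * (1 - h * ε / 2) := mul_le_mul_of_nonneg_left hle hexp
        _ = (1 - h * ε / 2) * Real.exp (h * Y t ω) := by ring
    · intro _
      rw [hp]
      have hexp := (Real.exp_pos (h * Y t ω)).le
      calc Real.exp (h * Y t ω) *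
            (μ[fun ω' => Real.exp (h * (Y (t + 1) ω' - Y t ω'))|ℱ t]) ω
          ≤ Real.exp (h * Y t ω) * Real.exp (h * b) := mul_le_mul_of_nonneg_left h3 hexp
        _ = Real.exp (h * (Y t ω + b)) := by rw [← Real.exp_add]; ring_nf
  · -- non-integrable case: condexp is 0
    rw [condExp_of_not_integrable hint]
    filter_upwards [hdrift t, hglb] with ω h4 h5
    constructor
    · intro hCY
      have hεb : ε ≤ b := by
        have := h4 hCY
        linarith
      have hlt : h * ε < 1 := lt_of_le_of_lt (by nlinarith) hb'
      have hexp := (Real.exp_pos (h * Y t ω)).le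
      simp only [Pi.zero_apply]
      nlinarith
    · intro _
      simp only [Pi.zero_apply]
      positivity
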